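/- Let k be an algebraically closed field, A a k-algebra, a an automorphism of A of finite order n with char k not dividing n, and let A#ℤ/n denote the smash product (i.e., the algebra A⋊ℤ/n where the generator of ℤ/n acts on A by a). Then every finite-dimensional simple A#ℤ/n-module, viewed as an A-module, is a direct sum of the form L ⊕ a*L ⊕ ⋯ ⊕ (a*)^{t-1}L, where L is a simple A-module and t is the minimal positive integer with (a*)ᵗL ≅ L. -/

import Mathlib

noncomputable section SmashAuxAll

variable {k A M : Type*} [Field k] [Ring A] [Algebra k A]
  [AddCommGroup M] [Module k M] (ρM : A →ₐ[k] Module.End k M)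
  (a : A ≃ₐ[k] A) (σ : M ≃ₗ[k] M)

/-- A k-submodule is A-stable. -/
def sst (U : Submodule k M) : Prop := ∀ x : A, ∀ u ∈ U, ρM x u ∈ U

/-- Twisted isomorphism between stable submodules: `e : V ≃ W` with
`e (ρ (b x) v) = ρ x (e v)`, i.e. an A-module iso `b* V ≅ W`. -/
def twiso (b : A ≃ₐ[k] A) (V W : Submodule k M) : Prop :=
  ∃ e : V ≃ₗ[k] W, ∀ (x : A) (v : V) (h : ρM (b x) ↑v ∈ V),
    (↑(e ⟨ρM (b x) ↑v, h⟩) : M) = ρM x ↑(e v)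

theorem twiso_refl (V : Submodule k M) : twiso ρM 1 V V := by
  refine ⟨LinearEquiv.refl k V, ?_⟩
  intro x v h
  simp [AlgEquiv.one_apply]

theorem twiso_comp {b c : A ≃ₐ[k] A} {V W X : Submodule k M}
    (h1 : twiso ρM b V W) (h2 : twiso ρM c W X) : twiso ρM (b * c) V X := by
  obtain ⟨e, he⟩ := h1
  obtain ⟨e', he'⟩ := h2
  refine ⟨e.trans e', ?_⟩
  intro x v h
  have hbc : ρM ((b * c) x) ↑v = ρM (b (c x)) ↑v := by rw [AlgEquiv.mul_apply]
  have h' : ρM (b (c x)) ↑v ∈ V := hbc ▸ h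
  have step1 := he (c x) v h'
  have hmem : ρM (c x) ↑(e v) ∈ W := by
    rw [← step1]; exact (e ⟨ρM (b (c x)) ↑v, h'⟩).2
  have step2 := he' x (e v) hmem
  have key : e ⟨ρM ((b * c) x) ↑v, h⟩ = ⟨ρM (c x) ↑(e v), hmem⟩ := by
    apply Subtype.ext
    rw [show (⟨ρM ((b * c) x) ↑v, h⟩ : V) = ⟨ρM (b (c x)) ↑v, h'⟩ from Subtype.ext hbc]
    exact step1
  calc (↑((e.trans e') ⟨ρM ((b * c) x) ↑v, h⟩) : M)
      = ↑(e' (e ⟨ρM ((b * c) x) ↑v, h⟩)) := rfl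
    _ = ↑(e' ⟨ρM (c x) ↑(e v), hmem⟩) := by rw [key]
    _ = ρM x ↑(e' (e v)) := step2
    _ = ρM x ↑((e.trans e') v) := rfl

theorem twiso_symm {b : A ≃ₐ[k] A} {V W : Submodule k M} (hV : sst ρM V)
    (h : twiso ρM b V W) : twiso ρM b⁻¹ W V := by
  obtain ⟨e, he⟩ := h
  refine ⟨e.symm, ?_⟩
  intro x w h
  set v₀ : V := e.symm w with hv₀
  have hbx : b (b⁻¹ x) = x := by
    rw [← AlgEquiv.mul_apply, mul_inv_cancel, AlgEquiv.one_apply]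
  have hmem : ρM (b (b⁻¹ x)) ↑v₀ ∈ V := by rw [hbx]; exact hV x _ v₀.2
  have step := he (b⁻¹ x) v₀ hmem
  have hev : e v₀ = w := e.apply_symm_apply w
  have key : e ⟨ρM (b (b⁻¹ x)) ↑v₀, hmem⟩ = ⟨ρM (b⁻¹ x) ↑w, h⟩ := by
    apply Subtype.ext
    rw [step, hev]
  have : e.symm ⟨ρM (b⁻¹ x) ↑w, h⟩ = ⟨ρM (b (b⁻¹ x)) ↑v₀, hmem⟩ := by
    rw [← key, e.symm_apply_apply]
  rw [this]
  simp only [hbx]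

theorem sst_iSup {ι : Sort*} (p : ι → Submodule k M) (h : ∀ i, sst ρM (p i)) :
    sst ρM (⨆ i, p i) := by
  intro x u hu
  refine Submodule.iSup_induction p (motive := fun u => ρM x u ∈ ⨆ i, p i) hu
    (fun i y hy => Submodule.mem_iSup_of_mem i (h i x y hy)) ?_ ?_
  · show ρM x (0:M) ∈ _
    rw [map_zero]; exact zero_mem _
  · intro y z hy hz
    show ρM x (y + z) ∈ _
    rw [map_add]; exact add_mem hy hz

theorem sst_biSup (G : Finset ℕ) (p : ℕ → Submodule k M) (h : ∀ i ∈ G, sst ρM (p i)) :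
    sst ρM (⨆ i ∈ G, p i) := by
  have : (⨆ i ∈ G, p i) = ⨆ i : G, p ↑i := by rw [iSup_subtype]
  rw [this]
  exact sst_iSup ρM _ (fun i => h ↑i i.2)

theorem sst_inf {U V : Submodule k M} (hU : sst ρM U) (hV : sst ρM V) :
    sst ρM (U ⊓ V) := fun x u hu => ⟨hU x u hu.1, hV x u hu.2⟩




theorem exists_min [FiniteDimensional k M] (W : Submodule k M) (hW : sst ρM W) (hWne : W ≠ ⊥) :
    ∃ S : Submodule k M, S ≤ W ∧ sst ρM S ∧ S ≠ ⊥ ∧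
      ∀ U ≤ S, sst ρM U → U ≠ ⊥ → U = S := by
  classical
  set p : ℕ → Prop := fun d => ∃ S : Submodule k M, S ≤ W ∧ sst ρM S ∧ S ≠ ⊥ ∧
    Module.finrank k S = d with hp
  have hpW : p (Module.finrank k W) := ⟨W, le_rfl, hW, hWne, rfl⟩
  obtain ⟨S, hSW, hSst, hSne, hSd⟩ := Nat.find_spec (⟨_, hpW⟩ : ∃ d, p d)
  refine ⟨S, hSW, hSst, hSne, ?_⟩
  intro U hUS hUst hUne
  have h1 : Nat.find (⟨_, hpW⟩ : ∃ d, p d) ≤ Module.finrank k U :=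
    Nat.find_le ⟨U, hUS.trans hSW, hUst, hUne, rfl⟩
  have h2 : Module.finrank k S ≤ Module.finrank k U := by
    rw [hSd]; exact h1
  exact Submodule.eq_of_le_of_finrank_le hUS h2

theorem proj_twiso (V W N : Submodule k M)
    (hV : sst ρM V) (hW : sst ρM W) (hN : sst ρM N)
    (hWmin : ∀ U ≤ W, sst ρM U → U ≠ ⊥ → U = W)
    (hVne : V ≠ ⊥)
    (hsub : V ≤ W ⊔ N) (h1 : V ⊓ N = ⊥) (h2 : W ⊓ N = ⊥) :
    twiso ρM 1 V W := by
  classical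
  have hdec : ∀ s : V, ∃ y, y ∈ W ∧ (↑s - y) ∈ N := by
    intro s
    obtain ⟨y, hy, z, hz, hyz⟩ := Submodule.mem_sup.mp (hsub s.2)
    exact ⟨y, hy, by rw [← hyz]; simpa using hz⟩
  choose φf hφW hφN using hdec
  have huniq : ∀ (m : M) (y₁ y₂ : M), y₁ ∈ W → y₂ ∈ W → m - y₁ ∈ N → m - y₂ ∈ N →
      y₁ = y₂ := by
    intro m y₁ y₂ hy1 hy2 hm1 hm2
    have hWmem : y₁ - y₂ ∈ W := sub_mem hy1 hy2
    have hNmem : y₁ - y₂ ∈ N := by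
      have := sub_mem hm2 hm1
      have heq : (m - y₂) - (m - y₁) = y₁ - y₂ := by abel
      rwa [heq] at this
    have : y₁ - y₂ ∈ W ⊓ N := ⟨hWmem, hNmem⟩
    rw [h2] at this
    exact sub_eq_zero.mp this
  have φadd : ∀ s s' : V, φf (s + s') = φf s + φf s' := by
    intro s s'
    refine huniq ↑(s + s') _ _ (hφW _) (add_mem (hφW s) (hφW s')) (hφN _) ?_
    have := add_mem (hφN s) (hφN s')
    have heq : (↑s - φf s) + (↑s' - φf s') = ↑(s + s') - (φf s + φf s') := by
      push_cast; abel
    rwa [heq] at this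
  have φsmul : ∀ (c : k) (s : V), φf (c • s) = c • φf s := by
    intro c s
    refine huniq ↑(c • s) _ _ (hφW _) (Submodule.smul_mem _ c (hφW s)) (hφN _) ?_
    have := Submodule.smul_mem N c (hφN s)
    have heq : c • (↑s - φf s) = ↑(c • s) - c • φf s := by
      push_cast; rw [smul_sub]
    rwa [heq] at this
  set φ : V →ₗ[k] M := { toFun := φf, map_add' := φadd, map_smul' := φsmul } with hφdef
  have hφWm : ∀ s : V, φ s ∈ W := hφW
  have hφNm : ∀ s : V, (↑s - φ s) ∈ N := hφN
  have htw : ∀ (x : A) (s : V) (h : ρM x ↑s ∈ V), φ ⟨ρM x ↑s, h⟩ = ρM x (φ s) := by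
    intro x s h
    refine huniq (ρM x ↑s) _ _ (hφWm ⟨ρM x ↑s, h⟩) (hW x _ (hφWm s)) (hφNm ⟨ρM x ↑s, h⟩) ?_
    have := hN x _ (hφNm s)
    rwa [map_sub] at this
  have hinj : Function.Injective φ := by
    rw [← LinearMap.ker_eq_bot]
    rw [Submodule.eq_bot_iff]
    intro s hs
    have h0 : (↑s : M) ∈ V ⊓ N := by
      refine ⟨s.2, ?_⟩
      have := hφNm s
      rw [LinearMap.mem_ker.mp hs, sub_zero] at this
      exact this
    rw [h1] at h0
    exact Subtype.ext h0
  have hrange : LinearMap.range φ = W := by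
    refine hWmin _ ?_ ?_ ?_
    · rintro m ⟨s, rfl⟩; exact hφWm s
    · rintro x m ⟨s, rfl⟩
      exact ⟨⟨ρM x ↑s, hV x _ s.2⟩, htw x s _⟩
    · obtain ⟨v, hvV, hvne⟩ := (Submodule.ne_bot_iff V).mp hVne
      rw [Submodule.ne_bot_iff]
      refine ⟨φ ⟨v, hvV⟩, ⟨_, rfl⟩, ?_⟩
      intro h0
      have : (⟨v, hvV⟩ : V) = 0 := hinj (by rw [h0, map_zero])
      exact hvne (congrArg Subtype.val this)
  refine ⟨(LinearEquiv.ofInjective φ hinj).trans (LinearEquiv.ofEq _ _ hrange), ?_⟩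
  intro x v h
  have hco : ∀ s : V, (↑(((LinearEquiv.ofInjective φ hinj).trans
      (LinearEquiv.ofEq _ _ hrange)) s) : M) = φ s := by
    intro s; rfl
  rw [hco, hco]
  exact htw x v h




theorem simple_le_sup (T : ℕ → Submodule k M) (G : Finset ℕ)
    (hT : ∀ i ∈ G, sst ρM (T i) ∧ ∀ U ≤ T i, sst ρM U → U ≠ ⊥ → U = T i)
    (S : Submodule k M) (hSst : sst ρM S) (hSne : S ≠ ⊥)
    (hSmin : ∀ U ≤ S, sst ρM U → U ≠ ⊥ → U = S)
    (hle : S ≤ ⨆ i ∈ G, T i) : ∃ i ∈ G, twiso ρM 1 S (T i) := by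
  classical
  revert hT hle
  induction G using Finset.induction_on with
  | empty =>
    intro hT hle
    exfalso
    apply hSne
    rw [← le_bot_iff]
    simpa using hle
  | @insert g G hg IH =>
    intro hT hle
    rw [Finset.iSup_insert] at hle
    set N' := ⨆ i ∈ G, T i with hN'
    have hN'st : sst ρM N' := sst_biSup ρM G T (fun i hi => (hT i (Finset.mem_insert_of_mem hi)).1)
    have hTg := hT g (Finset.mem_insert_self g G)
    by_cases hgN : T g ⊓ N' = ⊥
    · by_cases hSN : S ⊓ N' = ⊥
      · have := proj_twiso ρM S (T g) N' hSst hTg.1 hN'st hTg.2 hSne hle hSN hgN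
        exact ⟨g, Finset.mem_insert_self g G, this⟩
      · -- S ⊓ N' ≠ ⊥, so S ⊓ N' = S, so S ≤ N'
        have heq : S ⊓ N' = S := hSmin _ inf_le_left (sst_inf ρM hSst hN'st) hSN
        have : S ≤ N' := by rw [← heq]; exact inf_le_right
        obtain ⟨i, hi, hiso⟩ := IH (fun i hi => hT i (Finset.mem_insert_of_mem hi)) this
        exact ⟨i, Finset.mem_insert_of_mem hi, hiso⟩
    · -- T g ≤ N'
      have hgmin := hTg.2
      have heq : T g ⊓ N' = T g := hgmin _ inf_le_left (sst_inf ρM hTg.1 hN'st) hgN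
      have hgle : T g ≤ N' := by rw [← heq]; exact inf_le_right
      have : S ≤ N' := by
        refine hle.trans ?_
        rw [sup_le_iff]
        exact ⟨hgle, le_rfl⟩
      obtain ⟨i, hi, hiso⟩ := IH (fun i hi => hT i (Finset.mem_insert_of_mem hi)) this
      exact ⟨i, Finset.mem_insert_of_mem hi, hiso⟩




theorem pow_twist (hσA : ∀ (x : A) (v : M), σ (ρM (a x) v) = ρM x (σ v)) :
    ∀ (i : ℕ) (x : A) (v : M),
      (σ.toLinearMap ^ i) (ρM ((a ^ i) x) v) = ρM x ((σ.toLinearMap ^ i) v) := by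
  intro i
  induction i with
  | zero => intro x v; simp
  | succ i IH =>
    intro x v
    have h1 : (a ^ (i + 1)) x = a ((a ^ i) x) := by
      rw [pow_succ']; rfl
    have h2 : ∀ w, (σ.toLinearMap ^ (i + 1)) w = (σ.toLinearMap ^ i) (σ w) := by
      intro w
      rw [pow_succ, Module.End.mul_apply]
      rfl
    rw [h1, h2, h2, hσA ((a ^ i) x) v, IH]

theorem σpow_eq : ∀ i : ℕ, ((σ ^ i : M ≃ₗ[k] M) : M →ₗ[k] M) = σ.toLinearMap ^ i := by
  intro i
  ext v
  simp [LinearEquiv.pow_apply, Module.End.pow_apply]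


theorem σpow_bij (i : ℕ) : Function.Bijective (σ.toLinearMap ^ i : M →ₗ[k] M) := by
  have : ⇑(σ.toLinearMap ^ i) = ⇑(σ ^ i : M ≃ₗ[k] M) := by
    rw [← σpow_eq]; rfl
  rw [this]
  exact (σ ^ i : M ≃ₗ[k] M).bijective

theorem sst_comap4 (hσA : ∀ (x : A) (v : M), σ (ρM (a x) v) = ρM x (σ v)) (X : Submodule k M) (hX : sst ρM X) (i : ℕ) :
    sst ρM (X.comap (σ.toLinearMap ^ i)) := by
  intro x v hv
  have h := pow_twist ρM a σ hσA i ((a ^ i).symm x) v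
  rw [AlgEquiv.apply_symm_apply] at h
  show (σ.toLinearMap ^ i) (ρM x v) ∈ X
  rw [h]
  exact hX _ _ hv

theorem sst_map4 (hσA : ∀ (x : A) (v : M), σ (ρM (a x) v) = ρM x (σ v)) (X : Submodule k M) (hX : sst ρM X) (i : ℕ) :
    sst ρM (X.map (σ.toLinearMap ^ i)) := by
  rintro x w ⟨u, hu, rfl⟩
  rw [← pow_twist ρM a σ hσA i x u]
  exact ⟨ρM ((a ^ i) x) u, hX _ _ hu, rfl⟩

theorem comap_pow_add (i j : ℕ) (X : Submodule k M) :
    X.comap (σ.toLinearMap ^ (i + j)) =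
      (X.comap (σ.toLinearMap ^ i)).comap (σ.toLinearMap ^ j) := by
  ext v
  have h : (σ.toLinearMap ^ (i + j)) v = (σ.toLinearMap ^ i) ((σ.toLinearMap ^ j) v) := by
    rw [pow_add, Module.End.mul_apply]
  simp only [Submodule.mem_comap, h]

theorem map_comap_pow (i : ℕ) (X : Submodule k M) :
    (X.comap (σ.toLinearMap ^ i)).map (σ.toLinearMap ^ i) = X :=
  Submodule.map_comap_eq_of_surjective (σpow_bij σ i).2 X

theorem comap_pow_ne_bot (i : ℕ) (X : Submodule k M) (hX : X ≠ ⊥) :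
    X.comap (σ.toLinearMap ^ i) ≠ ⊥ := by
  intro h
  apply hX
  rw [← map_comap_pow σ i X, h, Submodule.map_bot]

theorem comap_pow_finrank (i : ℕ) (X : Submodule k M) :
    Module.finrank k (X.comap (σ.toLinearMap ^ i)) = Module.finrank k X := by
  have h1 : X.comap (σ.toLinearMap ^ i) = X.map ((σ ^ i : M ≃ₗ[k] M).symm : M →ₗ[k] M) := by
    rw [← Submodule.comap_equiv_eq_map_symm (σ ^ i : M ≃ₗ[k] M) X, σpow_eq]
  rw [h1, LinearEquiv.finrank_map_eq]

theorem min_comap4 (hσA : ∀ (x : A) (v : M), σ (ρM (a x) v) = ρM x (σ v)) (L : Submodule k M) (hLst : sst ρM L)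
    (hLmin : ∀ U ≤ L, sst ρM U → U ≠ ⊥ → U = L) (i : ℕ) :
    ∀ U ≤ L.comap (σ.toLinearMap ^ i), sst ρM U → U ≠ ⊥ → U = L.comap (σ.toLinearMap ^ i) := by
  intro U hU hUst hUne
  have h1 : U.map (σ.toLinearMap ^ i) ≤ L := by
    rw [← map_comap_pow σ i L]
    exact Submodule.map_mono hU
  have h2 : sst ρM (U.map (σ.toLinearMap ^ i)) := sst_map4 ρM a σ hσA U hUst i
  have h3 : U.map (σ.toLinearMap ^ i) ≠ ⊥ := by
    obtain ⟨u, hu, hune⟩ := (Submodule.ne_bot_iff U).mp hUne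
    rw [Submodule.ne_bot_iff]
    refine ⟨(σ.toLinearMap ^ i) u, ⟨u, hu, rfl⟩, ?_⟩
    intro h0
    exact hune ((σpow_bij σ i).1 (by rw [h0, map_zero]))
  have h4 := hLmin _ h1 h2 h3
  have h5 : U.map (σ.toLinearMap ^ i) = (L.comap (σ.toLinearMap ^ i)).map (σ.toLinearMap ^ i) := by
    rw [h4, map_comap_pow]
  exact Submodule.map_injective_of_injective (σpow_bij σ i).1 h5

theorem twiso_pow (L : Submodule k M) (i : ℕ) :
    ∃ e : (L.comap (σ.toLinearMap ^ i)) ≃ₗ[k] L,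
      (∀ v, (↑(e v) : M) = (σ.toLinearMap ^ i) ↑v) := by
  have hmap : Submodule.map ((σ ^ i : M ≃ₗ[k] M) : M →ₗ[k] M) (L.comap (σ.toLinearMap ^ i)) = L := by
    rw [σpow_eq]; exact map_comap_pow σ i L
  refine ⟨((σ ^ i : M ≃ₗ[k] M).submoduleMap _).trans (LinearEquiv.ofEq _ _ hmap), ?_⟩
  intro v
  have : (↑(((σ ^ i : M ≃ₗ[k] M).submoduleMap (L.comap (σ.toLinearMap ^ i))) v) : M)
      = (σ ^ i : M ≃ₗ[k] M) ↑v := LinearEquiv.submoduleMap_apply _ _ v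
  calc (↑((((σ ^ i : M ≃ₗ[k] M).submoduleMap _).trans (LinearEquiv.ofEq _ _ hmap)) v) : M)
      = (σ ^ i : M ≃ₗ[k] M) ↑v := this
    _ = (σ.toLinearMap ^ i) ↑v := LinearMap.congr_fun (σpow_eq σ i) ↑v



end SmashAuxAll

theorem stmt_2 (k : Type*) [Field k] [IsAlgClosed k]
    (A : Type*) [Ring A] [Algebra k A]
    (a : A ≃ₐ[k] A) (n : ℕ) (hn : 0 < n) (hchar : (n : k) ≠ 0) (han : a ^ n = 1)
    (M : Type*) [AddCommGroup M] [Module k M] [FiniteDimensional k M] [Nontrivial M]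
    (ρM : A →ₐ[k] Module.End k M)
    (σ : M ≃ₗ[k] M)
    (hσA : ∀ (x : A) (v : M), σ (ρM (a x) v) = ρM x (σ v))
    (hσn : σ.toLinearMap ^ n = 1)
    (hsimple : ∀ U : Submodule k M, (∀ x : A, ∀ u ∈ U, ρM x u ∈ U) →
      (∀ u ∈ U, σ u ∈ U) → U = ⊥ ∨ U = ⊤) :
    ∃ t : ℕ, 0 < t ∧ t ∣ n ∧
    ∃ L : Submodule k M, ∃ hL : (∀ x : A, ∀ u ∈ L, ρM x u ∈ L),
      L ≠ ⊥ ∧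
      (∀ U : Submodule k M, U ≤ L → (∀ x : A, ∀ u ∈ U, ρM x u ∈ U) → U = ⊥ ∨ U = L) ∧
      DirectSum.IsInternal
        (fun i : Fin t => Submodule.comap (σ.toLinearMap ^ (i : ℕ)) L) ∧
      (∃ g : L ≃ₗ[k] L, ∀ (x : A) (u : L),
        (g ⟨ρM ((a ^ t) x) u, hL _ _ u.2⟩ : M) = ρM x (g u)) ∧
      (∀ s : ℕ, 0 < s →
        (∃ g : L ≃ₗ[k] L, ∀ (x : A) (u : L),
          (g ⟨ρM ((a ^ s) x) u, hL _ _ u.2⟩ : M) = ρM x (g u)) → t ≤ s) := by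
  classical
  -- pick a minimal nonzero A-stable submodule L
  have htopst : sst ρM (⊤ : Submodule k M) := fun x u _ => trivial
  obtain ⟨L, -, hLst, hLne, hLmin⟩ :=
    exists_min ρM (⊤ : Submodule k M) htopst (by exact bot_ne_top.symm)
  set Li : ℕ → Submodule k M := fun i => Submodule.comap (σ.toLinearMap ^ i) L with hLidef
  have hLi0 : Li 0 = L := by
    simp only [hLidef, pow_zero, Module.End.one_eq_id, Submodule.comap_id]
  have hLin : Li n = L := by
    simp only [hLidef, hσn, Module.End.one_eq_id, Submodule.comap_id]
  set P : ℕ → Prop := fun s => twiso ρM (a ^ s) L L with hPdef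
  have hPn : P n := by
    show twiso ρM (a ^ n) L L
    rw [han]
    exact twiso_refl ρM L
  have hex : ∃ s, 0 < s ∧ P s := ⟨n, hn, hPn⟩
  set t := Nat.find hex with htdef
  obtain ⟨htpos, hPt⟩ : 0 < t ∧ P t := Nat.find_spec hex
  have htmin : ∀ s, 0 < s → P s → t ≤ s := fun s hs hPs => Nat.find_le ⟨hs, hPs⟩
  have hPsub : ∀ s, P s → t ≤ s → P (s - t) := by
    intro s hPs hts
    have h1 : twiso ρM (a ^ t)⁻¹ L L := twiso_symm ρM hLst hPt
    have h2 : twiso ρM ((a ^ t)⁻¹ * a ^ s) L L := twiso_comp ρM h1 hPs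
    have h3 : (a ^ t)⁻¹ * a ^ s = a ^ (s - t) := by
      have h4 : a ^ s = a ^ t * a ^ (s - t) := by rw [← pow_add]; congr 1; omega
      rw [h4, inv_mul_cancel_left]
    rwa [h3] at h2
  have hPdvd : ∀ s, P s → t ∣ s := by
    intro s
    induction s using Nat.strong_induction_on with
    | _ s IH =>
      intro hPs
      rcases Nat.eq_zero_or_pos s with h0 | hpos
      · simp [h0]
      · have hts : t ≤ s := htmin s hpos hPs
        obtain ⟨c, hc⟩ := IH (s - t) (by omega) (hPsub s hPs hts)
        exact ⟨c + 1, by rw [Nat.mul_succ]; omega⟩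
  have htn : t ∣ n := hPdvd n hPn
  have htlen : t ≤ n := Nat.le_of_dvd hn htn
  -- basic facts about the Li
  have hList : ∀ i, sst ρM (Li i) := fun i => sst_comap4 ρM a σ hσA L hLst i
  have hLimin : ∀ i, ∀ U ≤ Li i, sst ρM U → U ≠ ⊥ → U = Li i :=
    fun i => min_comap4 ρM a σ hσA L hLst hLmin i
  have hLine : ∀ i, Li i ≠ ⊥ := fun i => comap_pow_ne_bot σ i L hLne
  have hLifr : ∀ i, Module.finrank k (Li i) = Module.finrank k L :=
    fun i => comap_pow_finrank σ i L
  have hei : ∀ i, twiso ρM (a ^ i) (Li i) L := by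
    intro i
    obtain ⟨e, he⟩ := twiso_pow σ L i
    refine ⟨e, ?_⟩
    intro x v h
    rw [he, he, pow_twist ρM a σ hσA i x ↑v]
  have hcross : ∀ i j, i ≤ j → twiso ρM 1 (Li i) (Li j) → P (j - i) := by
    intro i j hij hiso
    have h1 : twiso ρM (a ^ i)⁻¹ L (Li i) := twiso_symm ρM (hList i) (hei i)
    have h2 := twiso_comp ρM h1 hiso
    have h3 := twiso_comp ρM h2 (hei j)
    have h4 : (a ^ i)⁻¹ * 1 * a ^ j = a ^ (j - i) := by
      rw [mul_one]
      have h5 : a ^ j = a ^ i * a ^ (j - i) := by rw [← pow_add]; congr 1; omega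
      rw [h5, inv_mul_cancel_left]
    rwa [h4] at h3
  -- isotypic-like pieces
  set G : ℕ → Finset ℕ := fun j => (Finset.range n).filter (fun i => i % t = j) with hGdef
  set Mj : ℕ → Submodule k M := fun j => ⨆ i ∈ G j, Li i with hMjdef
  have hMjst : ∀ j, sst ρM (Mj j) := fun j => sst_biSup ρM (G j) Li (fun i _ => hList i)
  set Y : Submodule k M := ⨆ j ∈ Finset.Ico 1 t, Mj j with hYdef
  have hYst : sst ρM Y := sst_biSup ρM _ Mj (fun j _ => hMjst j)
  -- the key disjointness
  have hD : Mj 0 ⊓ Y = ⊥ := by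
    by_contra hne
    obtain ⟨S, hSle, hSst, hSne, hSmin⟩ :=
      exists_min ρM (Mj 0 ⊓ Y) (sst_inf ρM (hMjst 0) hYst) hne
    have hS0 : S ≤ Mj 0 := hSle.trans inf_le_left
    have hSY : S ≤ Y := hSle.trans inf_le_right
    obtain ⟨i₀, hi₀G, hiso₀⟩ := simple_le_sup ρM Li (G 0)
      (fun i _ => ⟨hList i, hLimin i⟩) S hSst hSne hSmin hS0
    set G' : Finset ℕ := (Finset.range n).filter (fun i => i % t ≠ 0) with hG'def
    have hYle : Y ≤ ⨆ i ∈ G', Li i := by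
      refine iSup₂_le ?_
      intro j hj
      refine iSup₂_le ?_
      intro i hi
      have hjm := Finset.mem_Ico.mp hj
      have him := Finset.mem_filter.mp hi
      have hiG' : i ∈ G' := Finset.mem_filter.mpr ⟨him.1, by omega⟩
      exact le_biSup _ hiG'
    obtain ⟨i₁, hi₁G, hiso₁⟩ := simple_le_sup ρM Li G'
      (fun i _ => ⟨hList i, hLimin i⟩) S hSst hSne hSmin (hSY.trans hYle)
    have hsymm₀ : twiso ρM 1 (Li i₀) S := by
      have h := twiso_symm ρM hSst hiso₀
      rwa [inv_one] at h
    have hioj : twiso ρM 1 (Li i₀) (Li i₁) := by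
      have h := twiso_comp ρM hsymm₀ hiso₁
      rwa [one_mul] at h
    have ht0 : i₀ % t = 0 := by
      have := (Finset.mem_filter.mp hi₀G).2
      simpa using this
    have ht1 : i₁ % t ≠ 0 := by
      have := (Finset.mem_filter.mp hi₁G).2
      simpa using this
    have htdvd0 : t ∣ i₀ := Nat.dvd_of_mod_eq_zero ht0
    have htd1 : t ∣ i₁ := by
      rcases le_total i₀ i₁ with hle | hle
      · have hPd := hPdvd _ (hcross i₀ i₁ hle hioj)
        have h5 : i₁ = (i₁ - i₀) + i₀ := by omega
        rw [h5]
        exact Nat.dvd_add hPd htdvd0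
      · have hioj' : twiso ρM 1 (Li i₁) (Li i₀) := by
          have h := twiso_symm ρM (hList i₀) hioj
          rwa [inv_one] at h
        have hPd := hPdvd _ (hcross i₁ i₀ hle hioj')
        have h5 : i₁ = i₀ - (i₀ - i₁) := by omega
        rw [h5]
        exact Nat.dvd_sub htdvd0 hPd
    obtain ⟨c, rfl⟩ := htd1
    exact ht1 (Nat.mul_mod_right t c)
  -- M is the sum of the Li, i < n
  have hTop : (⨆ i ∈ Finset.range n, Li i) = ⊤ := by
    set V : Submodule k M := ⨆ i ∈ Finset.range n, Li i with hVdef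
    have hVst : sst ρM V := sst_biSup ρM _ Li (fun i _ => hList i)
    have hVσ : ∀ u ∈ V, σ u ∈ V := by
      have hVeq : V = ⨆ i : {x // x ∈ Finset.range n}, Li ↑i := by
        rw [hVdef, iSup_subtype]
      intro u hu
      rw [hVeq] at hu
      refine Submodule.iSup_induction _ (motive := fun u => σ u ∈ V) hu ?_ ?_ ?_
      · rintro ⟨i, hi⟩ y hy
        have hi' : i < n := Finset.mem_range.mp hi
        show σ y ∈ V
        rcases Nat.eq_zero_or_pos i with h0 | hpos
        · subst h0
          have hyL : y ∈ L := by rwa [hLi0] at hy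
          have hmem : σ y ∈ Li (n - 1) := by
            show (σ.toLinearMap ^ (n - 1)) (σ y) ∈ L
            have hh : (σ.toLinearMap ^ (n - 1)) (σ y) = (σ.toLinearMap ^ n) y := by
              have h1 : σ y = (σ.toLinearMap ^ 1) y := by simp
              rw [h1, ← Module.End.mul_apply, ← pow_add]
              congr 2
              omega
            rw [hh, hσn]
            exact hyL
          have hle : Li (n - 1) ≤ V := le_biSup _ (Finset.mem_range.mpr (by omega))
          exact hle hmem
        · have hmem : σ y ∈ Li (i - 1) := by
            show (σ.toLinearMap ^ (i - 1)) (σ y) ∈ L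
            have hh : (σ.toLinearMap ^ (i - 1)) (σ y) = (σ.toLinearMap ^ i) y := by
              have h1 : σ y = (σ.toLinearMap ^ 1) y := by simp
              rw [h1, ← Module.End.mul_apply, ← pow_add]
              congr 2
              omega
            rw [hh]
            exact hy
          have hle : Li (i - 1) ≤ V := le_biSup _ (Finset.mem_range.mpr (by omega))
          exact hle hmem
      · show σ (0 : M) ∈ V
        rw [map_zero]
        exact zero_mem _
      · intro y z hy hz
        show σ (y + z) ∈ V
        rw [map_add]
        exact add_mem hy hz
    rcases hsimple V hVst hVσ with h | h
    · exfalso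
      apply hLne
      have hle : L ≤ V := by
        have h1 : Li 0 ≤ V := le_biSup _ (Finset.mem_range.mpr hn)
        rwa [hLi0] at h1
      rw [h] at hle
      exact le_bot_iff.mp hle
    · exact h
  have h0G : (0 : ℕ) ∈ G 0 := Finset.mem_filter.mpr ⟨Finset.mem_range.mpr hn, by simp⟩
  have hLleM0 : L ≤ Mj 0 := by
    have hle : Li 0 ≤ Mj 0 := le_biSup _ h0G
    rwa [hLi0] at hle
  have hmapLi : ∀ (jn i : ℕ), jn ≤ i → (Li i).map (σ.toLinearMap ^ jn) = Li (i - jn) := by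
    intro jn i hji
    have h1 : Li i = (Li (i - jn)).comap (σ.toLinearMap ^ jn) := by
      simp only [hLidef]
      rw [← comap_pow_add σ (i - jn) jn L]
      congr 2
      omega
    rw [h1, map_comap_pow]
  have hcomapLi : ∀ (i j : ℕ), (Li i).comap (σ.toLinearMap ^ j) = Li (i + j) := by
    intro i j
    simp only [hLidef]
    rw [comap_pow_add σ i j L]
  have hMj0eq : Mj 0 = ⨆ i : {x // x ∈ G 0}, Li ↑i := by
    simp only [hMjdef]
    rw [iSup_subtype]
  have hM0map : (Mj 0).map (σ.toLinearMap ^ t) = Mj 0 := by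
    apply le_antisymm
    · rw [hMj0eq, Submodule.map_iSup]
      refine iSup_le ?_
      rintro ⟨i, hi⟩
      have him := Finset.mem_filter.mp hi
      have hin : i < n := Finset.mem_range.mp him.1
      have hidv : t ∣ i := Nat.dvd_of_mod_eq_zero (by simpa using him.2)
      rcases Nat.eq_zero_or_pos i with h0 | hpos
      · subst h0
        have hmt : (Li 0).map (σ.toLinearMap ^ t) = Li (n - t) := by
          rw [hLi0, ← hLin, hmapLi t n htlen]
        rw [hmt]
        have hdnt : t ∣ n - t := Nat.dvd_sub htn dvd_rfl
        obtain ⟨c, hc⟩ := hdnt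
        have hmem : (n - t) ∈ G 0 := Finset.mem_filter.mpr
          ⟨Finset.mem_range.mpr (by omega), by simp [hc, Nat.mul_mod_right]⟩
        exact le_iSup (fun (x : {x // x ∈ G 0}) => Li ↑x) ⟨n - t, hmem⟩
      · have hti : t ≤ i := Nat.le_of_dvd hpos hidv
        rw [hmapLi t i hti]
        have hdit : t ∣ i - t := Nat.dvd_sub hidv dvd_rfl
        obtain ⟨c, hc⟩ := hdit
        have hmem : (i - t) ∈ G 0 := Finset.mem_filter.mpr
          ⟨Finset.mem_range.mpr (by omega), by simp [hc, Nat.mul_mod_right]⟩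
        exact le_iSup (fun (x : {x // x ∈ G 0}) => Li ↑x) ⟨i - t, hmem⟩
    · rw [hMj0eq]
      refine iSup_le ?_
      rintro ⟨i, hi⟩
      have him := Finset.mem_filter.mp hi
      have hin : i < n := Finset.mem_range.mp him.1
      have hidv : t ∣ i := Nat.dvd_of_mod_eq_zero (by simpa using him.2)
      have hkey : Li i = (Li (i + t)).map (σ.toLinearMap ^ t) := by
        rw [← hcomapLi i t, map_comap_pow]
      rw [hkey]
      apply Submodule.map_mono
      have hain : i + t ≤ n := by
        have h2 : t ∣ n - i := Nat.dvd_sub htn hidv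
        have h3 : t ≤ n - i := Nat.le_of_dvd (by omega) h2
        omega
      rcases eq_or_lt_of_le hain with heq | hlt
      · rw [heq, hLin, ← hLi0]
        exact le_iSup (fun (x : {x // x ∈ G 0}) => Li ↑x) ⟨0, h0G⟩
      · obtain ⟨c, hc⟩ := hidv
        have hmem : (i + t) ∈ G 0 := Finset.mem_filter.mpr
          ⟨Finset.mem_range.mpr hlt, by
            have : i + t = t * (c + 1) := by rw [Nat.mul_succ]; omega
            simp [this, Nat.mul_mod_right]⟩
        exact le_iSup (fun (x : {x // x ∈ G 0}) => Li ↑x) ⟨i + t, hmem⟩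

  -- the Hom space L → Mj 0 and its twisted endomorphism
  obtain ⟨g, hg⟩ := hPt
  set Hsp : Submodule k (L →ₗ[k] M) :=
    { carrier := {f | LinearMap.range f ≤ Mj 0 ∧
        ∀ (x : A) (v : L) (h : ρM x ↑v ∈ L), f ⟨ρM x ↑v, h⟩ = ρM x (f v)},
      add_mem' := by
        rintro f f' ⟨hf1, hf2⟩ ⟨hf1', hf2'⟩
        constructor
        · rintro m ⟨v, rfl⟩
          exact add_mem (hf1 ⟨v, rfl⟩) (hf1' ⟨v, rfl⟩)
        · intro x v h
          simp only [LinearMap.add_apply, hf2 x v h, hf2' x v h, map_add]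
      zero_mem' := by
        constructor
        · rintro m ⟨v, rfl⟩
          simp only [LinearMap.zero_apply]
          exact zero_mem _
        · intro x v h
          simp only [LinearMap.zero_apply, map_zero]
      smul_mem' := by
        rintro c f ⟨hf1, hf2⟩
        constructor
        · rintro m ⟨v, rfl⟩
          exact Submodule.smul_mem _ c (hf1 ⟨v, rfl⟩)
        · intro x v h
          simp only [LinearMap.smul_apply, hf2 x v h, map_smul] } with hHspdef
  have hsub_mem : L.subtype ∈ Hsp := by
    constructor
    · rintro m ⟨v, rfl⟩
      exact hLleM0 v.2
    · intro x v h
      rfl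
  have hHne : Hsp ≠ ⊥ := by
    intro h
    obtain ⟨v₀, hv₀, hv₀ne⟩ := (Submodule.ne_bot_iff L).mp hLne
    have h1 : L.subtype ∈ (⊥ : Submodule k (L →ₗ[k] M)) := h ▸ hsub_mem
    rw [Submodule.mem_bot] at h1
    apply hv₀ne
    have := LinearMap.congr_fun h1 ⟨v₀, hv₀⟩
    simpa using this
  haveI : Nontrivial ↥Hsp := Submodule.nontrivial_iff_ne_bot.mpr hHne
  set τh : (L →ₗ[k] M) →ₗ[k] (L →ₗ[k] M) :=
    { toFun := fun f => (σ.toLinearMap ^ t) ∘ₗ (f ∘ₗ (g.symm : L →ₗ[k] L)),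
      map_add' := by intro f f'; ext v; simp,
      map_smul' := by intro c f; ext v; simp } with hτhdef
  have hτhW : ∀ f ∈ Hsp, τh f ∈ Hsp := by
    rintro f ⟨hf1, hf2⟩
    constructor
    · rintro m ⟨v, rfl⟩
      show (σ.toLinearMap ^ t) (f (g.symm v)) ∈ Mj 0
      rw [← hM0map]
      exact ⟨f (g.symm v), hf1 ⟨_, rfl⟩, rfl⟩
    · intro x v h
      have hmem : ρM ((a ^ t) x) ↑(g.symm v) ∈ L := hLst _ _ (g.symm v).2
      have hkey : g.symm ⟨ρM x ↑v, h⟩ = ⟨ρM ((a ^ t) x) ↑(g.symm v), hmem⟩ := by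
        apply g.injective
        rw [g.apply_symm_apply]
        apply Subtype.ext
        rw [hg x (g.symm v) hmem, g.apply_symm_apply]
      show (σ.toLinearMap ^ t) (f (g.symm ⟨ρM x ↑v, h⟩))
          = ρM x ((σ.toLinearMap ^ t) (f (g.symm v)))
      rw [hkey, hf2 ((a ^ t) x) (g.symm v) hmem, pow_twist ρM a σ hσA t x _]
  set τr : ↥Hsp →ₗ[k] ↥Hsp := τh.restrict hτhW with hτrdef
  obtain ⟨μ, hμ⟩ := Module.End.exists_eigenvalue (τr : Module.End k ↥Hsp)
  obtain ⟨fv, hfv⟩ := hμ.exists_hasEigenvector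
  set f₀ : L →ₗ[k] M := ↑fv with hf₀def
  have hfW : f₀ ∈ Hsp := fv.2
  have heig : τh f₀ = μ • f₀ := by
    have h1 : τr fv = μ • fv := hfv.apply_eq_smul
    have h2 := congrArg (Subtype.val) h1
    simpa [hτrdef, LinearMap.restrict_apply] using h2
  have hfne : f₀ ≠ 0 := by
    intro h
    exact hfv.2 (Submodule.coe_eq_zero.mp h)
  have hμne : μ ≠ 0 := by
    intro h0
    apply hfne
    rw [h0, zero_smul] at heig
    ext v
    have h1 := LinearMap.congr_fun heig (g v)
    simp only [hτhdef, LinearMap.coe_mk, AddHom.coe_mk, LinearMap.comp_apply,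
      LinearMap.zero_apply, LinearEquiv.coe_coe, g.symm_apply_apply] at h1
    have h2 : f₀ v = 0 := by
      apply (σpow_bij σ t).1
      rw [map_zero]
      exact h1
    simpa using h2
  set U : Submodule k M := LinearMap.range f₀ with hUdef
  have hUle : U ≤ Mj 0 := hfW.1
  have hUst : sst ρM U := by
    rintro x m ⟨v, rfl⟩
    exact ⟨⟨ρM x ↑v, hLst x _ v.2⟩, hfW.2 x v (hLst x _ v.2)⟩
  have hker : LinearMap.ker f₀ = ⊥ := by
    set K : Submodule k M := (LinearMap.ker f₀).map L.subtype with hKdef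
    have hKle : K ≤ L := by
      rintro m ⟨v, hv, rfl⟩
      exact v.2
    have hKst : sst ρM K := by
      rintro x m ⟨v, hv, rfl⟩
      refine ⟨⟨ρM x ↑v, hLst x _ v.2⟩, LinearMap.mem_ker.mpr ?_, rfl⟩
      rw [hfW.2 x v (hLst x _ v.2), LinearMap.mem_ker.mp hv, map_zero]
    by_cases hKne : K = ⊥
    · rw [Submodule.eq_bot_iff]
      intro v hv
      have hvm : (↑v : M) ∈ K := ⟨v, hv, rfl⟩
      rw [hKne, Submodule.mem_bot] at hvm
      exact Subtype.ext hvm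
    · exfalso
      have hKL := hLmin K hKle hKst hKne
      apply hfne
      ext v
      have hvK : (↑v : M) ∈ K := by rw [hKL]; exact v.2
      obtain ⟨w, hw, hwv⟩ := hvK
      have hvw : v = w := Subtype.ext hwv.symm
      rw [hvw]
      simpa using LinearMap.mem_ker.mp hw
  have hfinj : Function.Injective f₀ := by rw [← LinearMap.ker_eq_bot]; exact hker
  have hUne : U ≠ ⊥ := by
    rw [Submodule.ne_bot_iff]
    obtain ⟨v₀, hv₀, hv₀ne⟩ := (Submodule.ne_bot_iff L).mp hLne
    refine ⟨f₀ ⟨v₀, hv₀⟩, ⟨_, rfl⟩, ?_⟩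
    intro h
    have h1 : (⟨v₀, hv₀⟩ : L) = 0 := hfinj (by rw [h, map_zero])
    exact hv₀ne (congrArg Subtype.val h1)
  have hUmap : U.map (σ.toLinearMap ^ t) = U := by
    have hcomp : (σ.toLinearMap ^ t) ∘ₗ f₀ = μ • (f₀ ∘ₗ (g : L →ₗ[k] L)) := by
      ext v
      have h1 := LinearMap.congr_fun heig (g v)
      simp only [hτhdef, LinearMap.coe_mk, AddHom.coe_mk, LinearMap.comp_apply,
        LinearMap.smul_apply, LinearEquiv.coe_coe, g.symm_apply_apply] at h1 ⊢
      exact h1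
    have h2 : U.map (σ.toLinearMap ^ t) = LinearMap.range ((σ.toLinearMap ^ t) ∘ₗ f₀) := by
      rw [LinearMap.range_comp]
    rw [h2, hcomp]
    apply le_antisymm
    · rintro m ⟨v, rfl⟩
      simp only [LinearMap.smul_apply, LinearMap.comp_apply, LinearEquiv.coe_coe]
      exact Submodule.smul_mem _ μ ⟨g v, rfl⟩
    · rintro m ⟨v, rfl⟩
      refine ⟨μ⁻¹ • (g.symm v), ?_⟩
      simp only [LinearMap.smul_apply, LinearMap.comp_apply, LinearEquiv.coe_coe,
        map_smul, g.apply_symm_apply]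
      rw [smul_smul, inv_mul_cancel₀ hμne, one_smul]
  set V' : Submodule k M := ⨆ i : Fin t, U.comap (σ.toLinearMap ^ (i : ℕ)) with hV'def
  have hcomap0 : U.comap (σ.toLinearMap ^ (0 : ℕ)) = U := by
    rw [pow_zero, Module.End.one_eq_id, Submodule.comap_id]
  have hV'st : sst ρM V' := sst_iSup ρM _ (fun i => sst_comap4 ρM a σ hσA U hUst ↑i)
  have hV'σ : ∀ u ∈ V', σ u ∈ V' := by
    intro u hu
    refine Submodule.iSup_induction _ (motive := fun u => σ u ∈ V') hu ?_ ?_ ?_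
    · rintro ⟨i, hit⟩ y hy
      show σ y ∈ V'
      rcases Nat.eq_zero_or_pos i with h0 | hpos
      · subst h0
        have hyU : y ∈ U := by rwa [hcomap0] at hy
        have hmem : σ y ∈ U.comap (σ.toLinearMap ^ (t - 1)) := by
          show (σ.toLinearMap ^ (t - 1)) (σ y) ∈ U
          have hh : (σ.toLinearMap ^ (t - 1)) (σ y) = (σ.toLinearMap ^ t) y := by
            have h1 : σ y = (σ.toLinearMap ^ 1) y := by simp
            rw [h1, ← Module.End.mul_apply, ← pow_add]
            congr 2
            omega
          rw [hh, ← hUmap]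
          exact ⟨y, hyU, rfl⟩
        exact le_iSup (fun i : Fin t => U.comap (σ.toLinearMap ^ (i : ℕ)))
          ⟨t - 1, by omega⟩ hmem
      · have hmem : σ y ∈ U.comap (σ.toLinearMap ^ (i - 1)) := by
          show (σ.toLinearMap ^ (i - 1)) (σ y) ∈ U
          have hh : (σ.toLinearMap ^ (i - 1)) (σ y) = (σ.toLinearMap ^ i) y := by
            have h1 : σ y = (σ.toLinearMap ^ 1) y := by simp
            rw [h1, ← Module.End.mul_apply, ← pow_add]
            congr 2
            omega
          rw [hh]
          exact hy
        exact le_iSup (fun i : Fin t => U.comap (σ.toLinearMap ^ (i : ℕ)))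
          ⟨i - 1, by omega⟩ hmem
    · show σ (0 : M) ∈ V'
      rw [map_zero]
      exact zero_mem _
    · intro y z hy hz
      show σ (y + z) ∈ V'
      rw [map_add]
      exact add_mem hy hz
  have hV'top : V' = ⊤ := by
    rcases hsimple V' hV'st hV'σ with h | h
    · exfalso
      apply hUne
      have hle : U ≤ V' := by
        have h1 := le_iSup (fun i : Fin t => U.comap (σ.toLinearMap ^ (i : ℕ)))
          (⟨0, htpos⟩ : Fin t)
        rwa [show ((⟨0, htpos⟩ : Fin t) : ℕ) = 0 from rfl, hcomap0] at h1
      rw [h] at hle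
      exact le_bot_iff.mp hle
    · exact h
  have hcM0 : ∀ i : ℕ, i < t → (Mj 0).comap (σ.toLinearMap ^ i) ≤ Mj i := by
    intro i hit
    have heq : (Mj 0).comap (σ.toLinearMap ^ i)
        = (Mj 0).map (((σ ^ i : M ≃ₗ[k] M).symm : M →ₗ[k] M)) := by
      rw [← Submodule.comap_equiv_eq_map_symm (σ ^ i : M ≃ₗ[k] M) (Mj 0), σpow_eq]
    rw [heq, hMj0eq, Submodule.map_iSup]
    refine iSup_le ?_
    rintro ⟨l, hl⟩
    have hlm := Finset.mem_filter.mp hl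
    have hln : l < n := Finset.mem_range.mp hlm.1
    have hldv : t ∣ l := Nat.dvd_of_mod_eq_zero (by simpa using hlm.2)
    have hback : (Li l).map (((σ ^ i : M ≃ₗ[k] M).symm : M →ₗ[k] M))
        = (Li l).comap (σ.toLinearMap ^ i) := by
      rw [← Submodule.comap_equiv_eq_map_symm (σ ^ i : M ≃ₗ[k] M) (Li l), σpow_eq]
    rw [hback, hcomapLi l i]
    have hlin : l + i < n := by
      have h2 : t ∣ n - l := Nat.dvd_sub htn hldv
      have h3 : t ≤ n - l := Nat.le_of_dvd (by omega) h2
      omega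
    obtain ⟨c, hc⟩ := hldv
    have hmodli : (l + i) % t = i := by
      rw [hc, Nat.mul_add_mod, Nat.mod_eq_of_lt hit]
    have hmem : (l + i) ∈ G i := Finset.mem_filter.mpr
      ⟨Finset.mem_range.mpr hlin, by simp [hmodli]⟩
    have hfin : Li (l + i) ≤ Mj i := by
      simp only [hMjdef]
      exact le_biSup _ hmem
    exact hfin
  have hM0U : Mj 0 ≤ U := by
    intro m hm
    have hmV : m ∈ V' := by rw [hV'top]; trivial
    obtain ⟨c, hc1, hc2⟩ := (Submodule.mem_iSup_iff_exists_finsupp _ m).mp hmV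
    have hsum : ∑ i : Fin t, c i = m := by
      rw [← hc2, Finsupp.sum_fintype]
      intro i
      rfl
    have hc0 : c ⟨0, htpos⟩ ∈ U := by
      have h1 := hc1 ⟨0, htpos⟩
      rwa [show ((⟨0, htpos⟩ : Fin t) : ℕ) = 0 from rfl, hcomap0] at h1
    have hrest : m - c ⟨0, htpos⟩ ∈ Y := by
      have h4 : (∑ i : Fin t, c i)
          = c ⟨0, htpos⟩ + ∑ i ∈ Finset.univ.erase ⟨0, htpos⟩, c i :=
        (Finset.add_sum_erase _ _ (Finset.mem_univ _)).symm
      have hms : m - c ⟨0, htpos⟩ = ∑ i ∈ Finset.univ.erase ⟨0, htpos⟩, c i := by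
        rw [← hsum, h4, add_sub_cancel_left]
      rw [hms]
      refine Submodule.sum_mem _ ?_
      intro i hi
      have hine : i ≠ ⟨0, htpos⟩ := (Finset.mem_erase.mp hi).1
      have hipos : 0 < (i : ℕ) := by
        rcases Nat.eq_zero_or_pos (i : ℕ) with h0 | h
        · exact absurd (Fin.ext h0) hine
        · exact h
      have h5 : c i ∈ (Mj 0).comap (σ.toLinearMap ^ (i : ℕ)) :=
        Submodule.comap_mono hUle (hc1 i)
      have h6 : c i ∈ Mj ↑i := hcM0 ↑i i.2 h5
      have h7 : Mj ↑i ≤ Y := by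
        simp only [hYdef]
        exact le_biSup _ (Finset.mem_Ico.mpr ⟨hipos, i.2⟩)
      exact h7 h6
    have hdm : m - c ⟨0, htpos⟩ ∈ Mj 0 ⊓ Y := ⟨sub_mem hm (hUle hc0), hrest⟩
    rw [hD, Submodule.mem_bot] at hdm
    rw [sub_eq_zero.mp hdm]
    exact hc0
  have hUM0 : U = Mj 0 := le_antisymm hUle hM0U
  have hfrU : Module.finrank k U = Module.finrank k L := LinearMap.finrank_range_of_inj hfinj
  have hM0L : Mj 0 = L := by
    have h1 : Module.finrank k (Mj 0) ≤ Module.finrank k L := by rw [← hUM0, hfrU]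
    exact (Submodule.eq_of_le_of_finrank_le hLleM0 h1).symm
  have hLt : Li t = L := by
    rcases eq_or_lt_of_le htlen with heq | hlt
    · rw [heq, hLin]
    · have htG : t ∈ G 0 := Finset.mem_filter.mpr
        ⟨Finset.mem_range.mpr hlt, by simp [Nat.mod_self]⟩
      have hle : Li t ≤ L := by
        rw [← hM0L]
        simp only [hMjdef]
        exact le_biSup _ htG
      have hfr : Module.finrank k L ≤ Module.finrank k (Li t) := le_of_eq (hLifr t).symm
      exact Submodule.eq_of_le_of_finrank_le hle hfr
  have hper : ∀ i, Li (i + t) = Li i := by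
    intro i
    rw [show i + t = t + i from Nat.add_comm i t, ← hcomapLi t i, hLt]
  have hq : ∀ q r, Li (r + q * t) = Li r := by
    intro q
    induction q with
    | zero => intro r; simp
    | succ q IH =>
      intro r
      have h1 : r + (q + 1) * t = (r + q * t) + t := by ring
      rw [h1, hper, IH]
  have hmodLi : ∀ i, Li i = Li (i % t) := by
    intro i
    have h2 : i % t + (i / t) * t = i := Nat.mod_add_div' i t
    calc Li i = Li (i % t + (i / t) * t) := by rw [h2]
    _ = Li (i % t) := hq (i / t) (i % t)
  have hMjeq : ∀ j, j < t → Mj j = Li j := by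
    intro j hj
    apply le_antisymm
    · simp only [hMjdef]
      refine iSup₂_le ?_
      intro i hi
      have him := Finset.mem_filter.mp hi
      have heq : Li i = Li j := by
        rw [hmodLi i]
        congr 1
        simpa using him.2
      exact le_of_eq heq
    · have hjG : j ∈ G j := Finset.mem_filter.mpr
        ⟨Finset.mem_range.mpr (lt_of_lt_of_le hj htlen), by simp [Nat.mod_eq_of_lt hj]⟩
      simp only [hMjdef]
      exact le_biSup _ hjG
  have hDt : L ⊓ (⨆ i ∈ Finset.Ico 1 t, Li i) = ⊥ := by
    have h1 : (⨆ i ∈ Finset.Ico 1 t, Li i) ≤ Y := by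
      refine iSup₂_le ?_
      intro i hi
      have him := Finset.mem_Ico.mp hi
      rw [← hMjeq i him.2]
      simp only [hYdef]
      exact le_biSup _ hi
    rw [← hM0L, ← le_bot_iff]
    calc Mj 0 ⊓ (⨆ i ∈ Finset.Ico 1 t, Li i) ≤ Mj 0 ⊓ Y := inf_le_inf_left _ h1
    _ = ⊥ := hD
  have hsupT : (⨆ i : Fin t, Li ↑i) = ⊤ := by
    rw [← top_le_iff, ← hTop]
    refine iSup₂_le ?_
    intro i hi
    rw [hmodLi i]
    exact le_iSup (fun i : Fin t => Li ↑i) ⟨i % t, Nat.mod_lt i htpos⟩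
  have hindep : iSupIndep (fun i : Fin t => Li ↑i) := by
    intro j
    rw [Submodule.disjoint_def]
    intro v hvj hvo
    have h1 : (σ.toLinearMap ^ (j : ℕ)) v ∈ L := hvj
    have h2 : (σ.toLinearMap ^ (j : ℕ)) v ∈ ⨆ i ∈ Finset.Ico 1 t, Li i := by
      have hmain : Submodule.map (σ.toLinearMap ^ (j : ℕ))
          (⨆ (i : Fin t) (_ : i ≠ j), Li ↑i) ≤ ⨆ i ∈ Finset.Ico 1 t, Li i := by
        rw [Submodule.map_iSup]
        refine iSup_le ?_
        intro i
        rw [Submodule.map_iSup]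
        refine iSup_le ?_
        intro hij
        have hine : (i : ℕ) ≠ (j : ℕ) := fun h => hij (Fin.ext h)
        rcases le_or_gt (j : ℕ) (i : ℕ) with hle | hlt
        · rw [hmapLi ↑j ↑i hle]
          have hmem : (i : ℕ) - (j : ℕ) ∈ Finset.Ico 1 t := by
            refine Finset.mem_Ico.mpr ⟨by omega, ?_⟩
            have := i.2
            omega
          exact le_biSup _ hmem
        · rw [← hper ↑i, hmapLi ↑j ((i : ℕ) + t) (by omega)]
          have hmem : (i : ℕ) + t - (j : ℕ) ∈ Finset.Ico 1 t := by
            refine Finset.mem_Ico.mpr ⟨?_, ?_⟩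
            · have := j.2
              omega
            · omega
          exact le_biSup _ hmem
      exact hmain ⟨v, hvo, rfl⟩
    have h4 : (σ.toLinearMap ^ (j : ℕ)) v = 0 := by
      rw [← Submodule.mem_bot (R := k) (M := M), ← hDt]
      exact ⟨h1, h2⟩
    apply (σpow_bij σ (j : ℕ)).1
    rw [h4, map_zero]
  refine ⟨t, htpos, htn, L, hLst, hLne, ?_, ?_, ?_, ?_⟩
  · intro U' hU' hU'st
    by_cases h : U' = ⊥
    · exact Or.inl h
    · exact Or.inr (hLmin U' hU' hU'st h)
  · rw [DirectSum.isInternal_submodule_iff_iSupIndep_and_iSup_eq_top]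
    exact ⟨hindep, hsupT⟩
  · exact ⟨g, fun x u => hg x u (hLst _ _ u.2)⟩
  · intro s hs hgs
    obtain ⟨g', hg'⟩ := hgs
    refine htmin s hs ⟨g', ?_⟩
    intro x v h
    exact hg' x v
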